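/- Let τ and ν be nonempty words over the positive integers. Then the shuffle pattern τ-ℓ-ν is equivalent to the shuffle pattern ν-ℓ-τ, and the shuffle pattern τ-1-ν is equivalent to the shuffle pattern ν-1-τ; that is, for every finite set A of positive integers and all n, m ≥ 0 the corresponding avoiding sets in C_{n;m}^A have equal cardinalities. -/

import Mathlib

/-- A composition of `n` with `m` parts, all parts in `A`. -/
def IsCompOf (A : Finset ℕ) (n m : ℕ) (σ : List ℕ) : Prop :=
  (∀ x ∈ σ, x ∈ A) ∧ σ.sum = n ∧ σ.length = m

/-- The contiguous factor of `σ` of length `w.length` starting at position `i` is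
order-isomorphic to the word `w`. -/
def WordIsoAt (w σ : List ℕ) (i : ℕ) : Prop :=
  i + w.length ≤ σ.length ∧ ∀ s t : ℕ, s < w.length → t < w.length →
    (w.getD s 0 < w.getD t 0 ↔ σ.getD (i + s) 0 < σ.getD (i + t) 0)

/-- An occurrence of the shuffle pattern `τ-ℓ-ν` (middle letter greater than all
letters of `τ` and `ν`) in `σ`. -/
def ShuffleTopOccurs (τ ν σ : List ℕ) : Prop :=
  ∃ i p j : ℕ, WordIsoAt τ σ i ∧ i + τ.length ≤ p ∧ p + 1 ≤ j ∧ WordIsoAt ν σ j ∧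
    (∀ s : ℕ, s < τ.length → σ.getD (i + s) 0 < σ.getD p 0) ∧
    (∀ t : ℕ, t < ν.length → σ.getD (j + t) 0 < σ.getD p 0)

/-- An occurrence of the shuffle pattern `τ-1-ν` (middle letter smaller than all
letters of `τ` and `ν`) in `σ`. -/
def ShuffleBotOccurs (τ ν σ : List ℕ) : Prop :=
  ∃ i p j : ℕ, WordIsoAt τ σ i ∧ i + τ.length ≤ p ∧ p + 1 ≤ j ∧ WordIsoAt ν σ j ∧
    (∀ s : ℕ, s < τ.length → σ.getD p 0 < σ.getD (i + s) 0) ∧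
    (∀ t : ℕ, t < ν.length → σ.getD p 0 < σ.getD (j + t) 0)

namespace SPaux

/-! ### getD helpers -/

lemma getD_mem {σ : List ℕ} {p : ℕ} (h : p < σ.length) : σ.getD p 0 ∈ σ := by
  rw [List.getD_eq_getElem _ _ h]
  exact List.getElem_mem _

lemma getD_sep (A B : List ℕ) (x : ℕ) : (A ++ x :: B).getD A.length 0 = x := by
  rw [List.getD_append_right _ _ _ _ le_rfl]
  simp

lemma getD_left {A : List ℕ} (B : List ℕ) (x : ℕ) {j : ℕ} (h : j < A.length) :
    (A ++ x :: B).getD j 0 = A.getD j 0 :=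
  List.getD_append _ _ _ _ h

lemma getD_right (A : List ℕ) {B : List ℕ} (x : ℕ) (j : ℕ) :
    (A ++ x :: B).getD (A.length + 1 + j) 0 = B.getD j 0 := by
  rw [List.getD_append_right _ _ _ _ (by omega : A.length ≤ A.length + 1 + j)]
  rw [show A.length + 1 + j - A.length = j + 1 by omega]
  exact List.getD_cons_succ

lemma len_sep (A B : List ℕ) (x : ℕ) : (A ++ x :: B).length = A.length + B.length + 1 := by
  simp; omega

/-! ### WordIsoAt transfer -/

lemma iso_transfer {w σ σ' : List ℕ} {i i' : ℕ} (h : WordIsoAt w σ i)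
    (hb : i' + w.length ≤ σ'.length)
    (hv : ∀ s, s < w.length → σ'.getD (i' + s) 0 = σ.getD (i + s) 0) :
    WordIsoAt w σ' i' :=
  ⟨hb, fun s t hs ht => by rw [hv s hs, hv t ht]; exact h.2 s t hs ht⟩

/-! ### FacLT : factor order-isomorphic to `w` with all letters `< c` -/

def FacLT (w : List ℕ) (c : ℕ) (σ : List ℕ) : Prop :=
  ∃ i, WordIsoAt w σ i ∧ ∀ s, s < w.length → σ.getD (i + s) 0 < c

lemma facLT_mono {w σ : List ℕ} {c c' : ℕ} (h : c ≤ c') : FacLT w c σ → FacLT w c' σ :=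
  fun ⟨i, hi, hl⟩ => ⟨i, hi, fun s hs => lt_of_lt_of_le (hl s hs) h⟩

lemma avoid_sep {w A B : List ℕ} {x e i : ℕ} (he : e ≤ x)
    (hlt : ∀ s, s < w.length → (A ++ x :: B).getD (i + s) 0 < e) :
    i + w.length ≤ A.length ∨ A.length + 1 ≤ i := by
  by_contra hcon
  push_neg at hcon
  obtain ⟨h1, h2⟩ := hcon
  have hs : A.length - i < w.length := by omega
  have := hlt _ hs
  rw [show i + (A.length - i) = A.length by omega, getD_sep] at this
  omega

lemma facLT_append_left {w A : List ℕ} {c : ℕ} (S : List ℕ) (h : FacLT w c A) :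
    FacLT w c (A ++ S) := by
  obtain ⟨i, hi, hl⟩ := h
  have hv : ∀ s, s < w.length → (A ++ S).getD (i + s) 0 = A.getD (i + s) 0 := by
    intro s hs
    exact List.getD_append _ _ _ _ (by have := hi.1; omega)
  exact ⟨i, iso_transfer hi (by simp; have := hi.1; omega) hv,
    fun s hs => by rw [hv s hs]; exact hl s hs⟩

lemma facLT_shiftR {w B : List ℕ} {c : ℕ} (A : List ℕ) (x : ℕ) (h : FacLT w c B) :
    FacLT w c (A ++ x :: B) := by
  obtain ⟨i, hi, hl⟩ := h
  have hv : ∀ s, s < w.length →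
      (A ++ x :: B).getD (A.length + 1 + i + s) 0 = B.getD (i + s) 0 := by
    intro s hs
    rw [show A.length + 1 + i + s = A.length + 1 + (i + s) by omega, getD_right]
  refine ⟨A.length + 1 + i, iso_transfer hi ?_ hv, fun s hs => by rw [hv s hs]; exact hl s hs⟩
  rw [len_sep]; have := hi.1; omega

lemma facLT_split {w A B : List ℕ} {x c : ℕ} (hc : c ≤ x) :
    FacLT w c (A ++ x :: B) ↔ FacLT w c A ∨ FacLT w c B := by
  constructor
  · rintro ⟨i, hi, hl⟩
    rcases avoid_sep hc hl with hT | hT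
    · left
      have hv : ∀ s, s < w.length → A.getD (i + s) 0 = (A ++ x :: B).getD (i + s) 0 := by
        intro s hs
        rw [getD_left B x (by omega)]
      exact ⟨i, iso_transfer hi hT hv, fun s hs => by rw [hv s hs]; exact hl s hs⟩
    · right
      have hlen := len_sep A B x
      have hb := hi.1
      have hv : ∀ s, s < w.length →
          B.getD (i - A.length - 1 + s) 0 = (A ++ x :: B).getD (i + s) 0 := by
        intro s hs
        rw [show i + s = A.length + 1 + (i - A.length - 1 + s) by omega, getD_right]
      exact ⟨i - A.length - 1, iso_transfer hi (by omega) hv,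
        fun s hs => by rw [hv s hs]; exact hl s hs⟩
  · rintro (h | h)
    · exact facLT_append_left _ h
    · exact facLT_shiftR _ _ h


/-! ### Occurrence lemmas -/

lemma occ_nil {t v : List ℕ} : ¬ ShuffleTopOccurs t v [] := by
  rintro ⟨i, p, j, _, _, hpj, hvj, _, _⟩
  have := hvj.1
  simp at this
  omega

lemma occ_facLT {t v σ : List ℕ} {x : ℕ} (hall : ∀ y ∈ σ, y ≤ x)
    (h : ShuffleTopOccurs t v σ) : FacLT t x σ ∧ FacLT v x σ := by
  obtain ⟨i, p, j, hti, hip, hpj, hvj, hdt, hdv⟩ := h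
  have hp : p < σ.length := by have := hvj.1; omega
  have hpx : σ.getD p 0 ≤ x := hall _ (getD_mem hp)
  exact ⟨⟨i, hti, fun s hs => lt_of_lt_of_le (hdt s hs) hpx⟩,
    ⟨j, hvj, fun s hs => lt_of_lt_of_le (hdv s hs) hpx⟩⟩

lemma occ_split {t v A B : List ℕ} {x : ℕ} (hall : ∀ y ∈ A ++ x :: B, y ≤ x) :
    ShuffleTopOccurs t v (A ++ x :: B) ↔
      ShuffleTopOccurs t v A ∨ ShuffleTopOccurs t v B ∨ FacLT t x A ∧ FacLT v x B := by
  have hlen := len_sep A B x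
  constructor
  · rintro ⟨i, p, j, hti, hip, hpj, hvj, hdt, hdv⟩
    have hp : p < (A ++ x :: B).length := by have := hvj.1; omega
    have hpx : (A ++ x :: B).getD p 0 ≤ x := hall _ (getD_mem hp)
    have hTd : i + t.length ≤ A.length ∨ A.length + 1 ≤ i := avoid_sep hpx hdt
    rcases hTd with hT | hT
    · have hVd : j + v.length ≤ A.length ∨ A.length + 1 ≤ j := avoid_sep hpx hdv
      rcases hVd with hV | hV
      · -- occurrence inside A
        left
        have hpA : p < A.length := by omega
        have hvt : ∀ s, s < t.length → A.getD (i + s) 0 = (A ++ x :: B).getD (i + s) 0 :=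
          fun s hs => (getD_left B x (by omega)).symm
        have hvv : ∀ s, s < v.length → A.getD (j + s) 0 = (A ++ x :: B).getD (j + s) 0 :=
          fun s hs => (getD_left B x (by omega)).symm
        have hpv : A.getD p 0 = (A ++ x :: B).getD p 0 := (getD_left B x hpA).symm
        exact ⟨i, p, j, iso_transfer hti hT hvt, hip, hpj, iso_transfer hvj hV hvv,
          fun s hs => by rw [hvt s hs, hpv]; exact hdt s hs,
          fun s hs => by rw [hvv s hs, hpv]; exact hdv s hs⟩
      · -- t in A, v in B : cross
        right; right
        have hvt : ∀ s, s < t.length → A.getD (i + s) 0 = (A ++ x :: B).getD (i + s) 0 :=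
          fun s hs => (getD_left B x (by omega)).symm
        have hvv : ∀ s, s < v.length →
            B.getD (j - A.length - 1 + s) 0 = (A ++ x :: B).getD (j + s) 0 := by
          intro s hs
          rw [show j + s = A.length + 1 + (j - A.length - 1 + s) by omega, getD_right]
        refine ⟨⟨i, iso_transfer hti hT hvt, fun s hs => ?_⟩,
          ⟨j - A.length - 1, iso_transfer hvj (by have := hvj.1; omega) hvv, fun s hs => ?_⟩⟩
        · rw [hvt s hs]; exact lt_of_lt_of_le (hdt s hs) hpx
        · rw [hvv s hs]; exact lt_of_lt_of_le (hdv s hs) hpx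
    · -- occurrence inside B
      right; left
      have hpB : A.length + 1 ≤ p := by omega
      have hjB : A.length + 1 ≤ j := by omega
      have hvt : ∀ s, s < t.length →
          B.getD (i - A.length - 1 + s) 0 = (A ++ x :: B).getD (i + s) 0 := by
        intro s hs
        rw [show i + s = A.length + 1 + (i - A.length - 1 + s) by omega, getD_right]
      have hvv : ∀ s, s < v.length →
          B.getD (j - A.length - 1 + s) 0 = (A ++ x :: B).getD (j + s) 0 := by
        intro s hs
        rw [show j + s = A.length + 1 + (j - A.length - 1 + s) by omega, getD_right]
      have hpv : B.getD (p - A.length - 1) 0 = (A ++ x :: B).getD p 0 := by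
        conv_rhs => rw [show p = A.length + 1 + (p - A.length - 1) by omega]
        exact (getD_right A x _).symm
      refine ⟨i - A.length - 1, p - A.length - 1, j - A.length - 1,
        iso_transfer hti (by have := hti.1; omega) hvt, by omega, by omega,
        iso_transfer hvj (by have := hvj.1; omega) hvv,
        fun s hs => ?_, fun s hs => ?_⟩
      · rw [hvt s hs, hpv]; exact hdt s hs
      · rw [hvv s hs, hpv]; exact hdv s hs
  · rintro (h | h | ⟨⟨i, hti, hlt⟩, ⟨i2, hvi, hlv⟩⟩)
    · obtain ⟨i, p, j, hti, hip, hpj, hvj, hdt, hdv⟩ := h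
      have hpA : p < A.length := by have := hvj.1; omega
      have hvt : ∀ s, s < t.length → (A ++ x :: B).getD (i + s) 0 = A.getD (i + s) 0 :=
        fun s hs => getD_left B x (by have := hti.1; omega)
      have hvv : ∀ s, s < v.length → (A ++ x :: B).getD (j + s) 0 = A.getD (j + s) 0 :=
        fun s hs => getD_left B x (by have := hvj.1; omega)
      have hpv : (A ++ x :: B).getD p 0 = A.getD p 0 := getD_left B x hpA
      exact ⟨i, p, j, iso_transfer hti (by have := hti.1; omega) hvt, hip, hpj,
        iso_transfer hvj (by have := hvj.1; omega) hvv,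
        fun s hs => by rw [hvt s hs, hpv]; exact hdt s hs,
        fun s hs => by rw [hvv s hs, hpv]; exact hdv s hs⟩
    · obtain ⟨i, p, j, hti, hip, hpj, hvj, hdt, hdv⟩ := h
      have hvt : ∀ s, s < t.length →
          (A ++ x :: B).getD (A.length + 1 + i + s) 0 = B.getD (i + s) 0 := by
        intro s hs
        rw [show A.length + 1 + i + s = A.length + 1 + (i + s) by omega, getD_right]
      have hvv : ∀ s, s < v.length →
          (A ++ x :: B).getD (A.length + 1 + j + s) 0 = B.getD (j + s) 0 := by
        intro s hs
        rw [show A.length + 1 + j + s = A.length + 1 + (j + s) by omega, getD_right]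
      have hpv : (A ++ x :: B).getD (A.length + 1 + p) 0 = B.getD p 0 := getD_right A x p
      exact ⟨A.length + 1 + i, A.length + 1 + p, A.length + 1 + j,
        iso_transfer hti (by have := hti.1; omega) hvt, by omega, by omega,
        iso_transfer hvj (by have := hvj.1; omega) hvv,
        fun s hs => by rw [hvt s hs, hpv]; exact hdt s hs,
        fun s hs => by rw [hvv s hs, hpv]; exact hdv s hs⟩
    · -- cross occurrence with middle letter the separator x
      have hvt : ∀ s, s < t.length → (A ++ x :: B).getD (i + s) 0 = A.getD (i + s) 0 :=
        fun s hs => getD_left B x (by have := hti.1; omega)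
      have hvv : ∀ s, s < v.length →
          (A ++ x :: B).getD (A.length + 1 + i2 + s) 0 = B.getD (i2 + s) 0 := by
        intro s hs
        rw [show A.length + 1 + i2 + s = A.length + 1 + (i2 + s) by omega, getD_right]
      refine ⟨i, A.length, A.length + 1 + i2,
        iso_transfer hti (by have := hti.1; omega) hvt, hti.1, by omega,
        iso_transfer hvi (by have := hvi.1; omega) hvv,
        fun s hs => ?_, fun s hs => ?_⟩
      · rw [hvt s hs, getD_sep]; exact hlt s hs
      · rw [hvv s hs, getD_sep]; exact hlv s hs


/-! ### maximum of a list -/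

def maxL (σ : List ℕ) : ℕ := σ.foldr max 0

lemma maxL_cons (y : ℕ) (l : List ℕ) : maxL (y :: l) = max y (maxL l) := rfl

lemma le_maxL {σ : List ℕ} {y : ℕ} (h : y ∈ σ) : y ≤ maxL σ := by
  induction σ with
  | nil => simp at h
  | cons a l ih =>
    rw [maxL_cons]
    rcases List.mem_cons.1 h with rfl | h'
    · exact le_max_left _ _
    · exact le_trans (ih h') (le_max_right _ _)

lemma maxL_mem {σ : List ℕ} (h : σ ≠ []) : maxL σ ∈ σ := by
  induction σ with
  | nil => exact absurd rfl h
  | cons a l ih =>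
    rw [maxL_cons]
    rcases eq_or_ne l [] with rfl | hl
    · simp [maxL]
    · rcases le_total (maxL l) a with h' | h'
      · rw [max_eq_left h']; exact List.mem_cons_self
      · rw [max_eq_right h']; exact List.mem_cons_of_mem _ (ih hl)

lemma maxL_perm {σ σ' : List ℕ} (h : σ.Perm σ') : maxL σ = maxL σ' := by
  have key : ∀ l l' : List ℕ, l.Perm l' → maxL l ≤ maxL l' := by
    intro l l' hp
    rcases eq_or_ne l [] with rfl | hn
    · exact Nat.zero_le _
    · exact le_maxL (hp.subset (maxL_mem hn))
  exact le_antisymm (key _ _ h) (key _ _ h.symm)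

/-! ### splitting at the first occurrence of `x` -/

def splitA (x : ℕ) : List ℕ → List ℕ
  | [] => []
  | y :: l => if y = x then [] else y :: splitA x l

def splitB (x : ℕ) : List ℕ → List ℕ
  | [] => []
  | y :: l => if y = x then l else splitB x l

lemma split_spec {x : ℕ} {σ : List ℕ} (h : x ∈ σ) :
    σ = splitA x σ ++ x :: splitB x σ ∧ x ∉ splitA x σ := by
  induction σ with
  | nil => simp at h
  | cons a l ih =>
    by_cases ha : a = x
    · subst ha
      simp [splitA, splitB]
    · have hx : x ∈ l := by
        rcases List.mem_cons.1 h with h' | h'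
        · exact absurd h'.symm ha
        · exact h'
      obtain ⟨h1, h2⟩ := ih hx
      constructor
      · simp only [splitA, splitB, if_neg ha]
        rw [List.cons_append]
        exact congrArg (a :: ·) h1
      · simp only [splitA, if_neg ha]
        intro hmem
        rcases List.mem_cons.1 hmem with h' | h'
        · exact ha h'.symm
        · exact h2 h'

lemma splitA_len {x : ℕ} {σ : List ℕ} (h : x ∈ σ) : (splitA x σ).length < σ.length := by
  have := congrArg List.length (split_spec h).1
  rw [len_sep] at this
  omega

lemma splitB_len {x : ℕ} {σ : List ℕ} (h : x ∈ σ) : (splitB x σ).length < σ.length := by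
  have := congrArg List.length (split_spec h).1
  rw [len_sep] at this
  omega

lemma splitA_eq {x : ℕ} {A : List ℕ} (B : List ℕ) (hxA : x ∉ A) :
    splitA x (A ++ x :: B) = A ∧ splitB x (A ++ x :: B) = B := by
  induction A with
  | nil => simp [splitA, splitB]
  | cons a l ih =>
    have ha : ¬ a = x := fun h => hxA (h ▸ List.mem_cons_self)
    have ihl := ih (fun h => hxA (List.mem_cons_of_mem _ h))
    simp only [List.cons_append, splitA, splitB, if_neg ha]
    exact ⟨congrArg (a :: ·) ihl.1, ihl.2⟩

/-! ### last-occurrence splitting -/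

lemma exists_last_split {x : ℕ} {σ : List ℕ} (h : x ∈ σ) :
    ∃ C D : List ℕ, σ = C ++ x :: D ∧ x ∉ D := by
  induction σ with
  | nil => simp at h
  | cons a l ih =>
    by_cases hx : x ∈ l
    · obtain ⟨C, D, h1, h2⟩ := ih hx
      exact ⟨a :: C, D, by rw [List.cons_append, h1], h2⟩
    · have ha : a = x := by
        rcases List.mem_cons.1 h with h' | h'
        · exact h'.symm
        · exact absurd h' hx
      exact ⟨[], l, by rw [ha]; rfl, hx⟩

lemma last_split_unique {x : ℕ} : ∀ {C D C' D' : List ℕ},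
    C ++ x :: D = C' ++ x :: D' → x ∉ D → x ∉ D' → C = C' ∧ D = D' := by
  intro C
  induction C with
  | nil =>
    intro D C' D' h hD hD'
    cases C' with
    | nil => simpa using h
    | cons c' C'' =>
      rw [List.nil_append, List.cons_append, List.cons_eq_cons] at h
      exfalso
      apply hD
      rw [h.2]
      exact List.mem_append.2 (Or.inr (List.mem_cons_self))
  | cons c C ih =>
    intro D C' D' h hD hD'
    cases C' with
    | nil =>
      rw [List.nil_append, List.cons_append, List.cons_eq_cons] at h
      exfalso
      apply hD'
      rw [← h.2]
      exact List.mem_append.2 (Or.inr (List.mem_cons_self))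
    | cons c' C'' =>
      rw [List.cons_append, List.cons_append, List.cons_eq_cons] at h
      obtain ⟨h1, h2⟩ := ih h.2 hD hD'
      exact ⟨by rw [h.1, h1], h2⟩

/-! ### The bijection F -/

open Classical in
noncomputable def F (t v : List ℕ) (σ : List ℕ) : List ℕ :=
  if hσ : σ = [] then []
  else
    if FacLT t (maxL σ) σ ∧ FacLT v (maxL σ) σ then
      F t v (splitB (maxL σ) σ) ++ maxL σ :: F t v (splitA (maxL σ) σ)
    else σ
termination_by σ.length
decreasing_by
  · exact splitB_len (maxL_mem hσ)
  · exact splitA_len (maxL_mem hσ)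

lemma F_nil (t v : List ℕ) : F t v [] = [] := by rw [F]; simp

open Classical in
lemma F_deg {t v σ : List ℕ} (hσ : σ ≠ [])
    (h : ¬ (FacLT t (maxL σ) σ ∧ FacLT v (maxL σ) σ)) : F t v σ = σ := by
  rw [F, dif_neg hσ, if_neg h]

open Classical in
lemma F_nondeg {t v σ : List ℕ} (hσ : σ ≠ [])
    (h : FacLT t (maxL σ) σ ∧ FacLT v (maxL σ) σ) :
    F t v σ = F t v (splitB (maxL σ) σ) ++ maxL σ :: F t v (splitA (maxL σ) σ) := by
  rw [F, dif_neg hσ, if_pos h]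


/-- Convenient packaging of the non-degenerate unfolding. -/
lemma F_step {t v σ : List ℕ} (hσ : σ ≠ [])
    (h : FacLT t (maxL σ) σ ∧ FacLT v (maxL σ) σ) :
    ∃ A B : List ℕ, σ = A ++ maxL σ :: B ∧ maxL σ ∉ A ∧
      A.length < σ.length ∧ B.length < σ.length ∧
      F t v σ = F t v B ++ maxL σ :: F t v A := by
  obtain ⟨h1, h2⟩ := split_spec (maxL_mem hσ)
  exact ⟨splitA (maxL σ) σ, splitB (maxL σ) σ, h1, h2,
    splitA_len (maxL_mem hσ), splitB_len (maxL_mem hσ), F_nondeg hσ h⟩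

lemma F_perm (t v : List ℕ) : ∀ σ : List ℕ, σ.Perm (F t v σ) := by
  have H : ∀ n : ℕ, ∀ σ : List ℕ, σ.length ≤ n → σ.Perm (F t v σ) := by
    intro n
    induction n with
    | zero =>
      intro σ hσ
      have : σ = [] := List.length_eq_zero_iff.1 (Nat.le_zero.1 hσ)
      subst this
      rw [F_nil]
    | succ n ih =>
      intro σ hσ
      rcases eq_or_ne σ [] with rfl | hnil
      · rw [F_nil]
      · by_cases hdeg : FacLT t (maxL σ) σ ∧ FacLT v (maxL σ) σ
        · obtain ⟨A, B, hAB, _, hlA, hlB, hF⟩ := F_step hnil hdeg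
          set x := maxL σ with hx
          rw [hF]
          have ihA : A.Perm (F t v A) := ih A (by omega)
          have ihB : B.Perm (F t v B) := ih B (by omega)
          have p1 : List.Perm (A ++ x :: B) (x :: (A ++ B)) := List.perm_middle
          have p2 : List.Perm (x :: (A ++ B)) (x :: (B ++ A)) :=
            (List.perm_append_comm).cons _
          have p3 : List.Perm (x :: (B ++ A)) (x :: (F t v B ++ F t v A)) :=
            (ihB.append ihA).cons _
          have p4 : List.Perm (F t v B ++ x :: F t v A) (x :: (F t v B ++ F t v A)) :=
            List.perm_middle
          rw [hAB]
          exact ((p1.trans p2).trans p3).trans p4.symm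
        · rw [F_deg hnil hdeg]
  exact fun σ => H σ.length σ le_rfl

lemma maxL_F (t v σ : List ℕ) : maxL (F t v σ) = maxL σ :=
  (maxL_perm (F_perm t v σ)).symm

lemma F_facLT (t v : List ℕ) :
    ∀ σ, ∀ w, (w = t ∨ w = v) → ∀ c, (FacLT w c (F t v σ) ↔ FacLT w c σ) := by
  have H : ∀ n σ, σ.length ≤ n → ∀ w, (w = t ∨ w = v) → ∀ c,
      (FacLT w c (F t v σ) ↔ FacLT w c σ) := by
    intro n
    induction n with
    | zero =>
      intro σ hσ w hw c
      have : σ = [] := List.length_eq_zero_iff.1 (Nat.le_zero.1 hσ)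
      subst this
      rw [F_nil]
    | succ n ih =>
      intro σ hσ w hw c
      rcases eq_or_ne σ [] with rfl | hnil
      · rw [F_nil]
      · by_cases hdeg : FacLT t (maxL σ) σ ∧ FacLT v (maxL σ) σ
        · obtain ⟨A, B, hAB, _, hlA, hlB, hF⟩ := F_step hnil hdeg
          set x := maxL σ with hx
          have key : ∀ c', c' ≤ x → (FacLT w c' (F t v σ) ↔ FacLT w c' σ) := by
            intro c' hc'
            rw [hF]
            rw [facLT_split hc']
            rw [ih B (by omega) w hw, ih A (by omega) w hw]
            conv_rhs => rw [hAB]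
            rw [facLT_split hc']
            exact or_comm
          rcases le_or_gt c x with hc | hc
          · exact key c hc
          · have hwx : FacLT w x σ := by
              rcases hw with rfl | rfl
              · exact hdeg.1
              · exact hdeg.2
            exact iff_of_true (facLT_mono hc.le ((key x le_rfl).2 hwx)) (facLT_mono hc.le hwx)
        · rw [F_deg hnil hdeg]
  exact fun σ => H σ.length σ le_rfl

set_option maxHeartbeats 2000000 in
lemma F_occ (t v : List ℕ) :
    ∀ σ, (ShuffleTopOccurs v t (F t v σ) ↔ ShuffleTopOccurs t v σ) ∧
         (ShuffleTopOccurs t v (F t v σ) ↔ ShuffleTopOccurs v t σ) := by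
  have H : ∀ n σ, σ.length ≤ n →
      (ShuffleTopOccurs v t (F t v σ) ↔ ShuffleTopOccurs t v σ) ∧
      (ShuffleTopOccurs t v (F t v σ) ↔ ShuffleTopOccurs v t σ) := by
    intro n
    induction n with
    | zero =>
      intro σ hσ
      have : σ = [] := List.length_eq_zero_iff.1 (Nat.le_zero.1 hσ)
      subst this
      rw [F_nil]
      exact ⟨iff_of_false occ_nil occ_nil, iff_of_false occ_nil occ_nil⟩
    | succ n ih =>
      intro σ hσ
      rcases eq_or_ne σ [] with rfl | hnil
      · rw [F_nil]
        exact ⟨iff_of_false occ_nil occ_nil, iff_of_false occ_nil occ_nil⟩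
      · by_cases hdeg : FacLT t (maxL σ) σ ∧ FacLT v (maxL σ) σ
        · obtain ⟨A, B, hAB, _, hlA, hlB, hF⟩ := F_step hnil hdeg
          set x := maxL σ with hx
          have hallσ : ∀ y ∈ A ++ x :: B, y ≤ x := by
            intro y hy
            rw [← hAB] at hy
            exact le_maxL hy
          have hallF : ∀ y ∈ F t v B ++ x :: F t v A, y ≤ x := by
            intro y hy
            rw [← hF] at hy
            exact le_trans (le_maxL hy) (le_of_eq (maxL_F t v σ))
          have ihA := ih A (by omega)
          have ihB := ih B (by omega)
          have hfA := F_facLT t v A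
          have hfB := F_facLT t v B
          constructor
          · rw [hF, occ_split hallF]
            conv_rhs => rw [hAB]
            rw [occ_split hallσ]
            rw [ihB.1, ihA.1, hfB v (Or.inr rfl) x, hfA t (Or.inl rfl) x]
            tauto
          · rw [hF, occ_split hallF]
            conv_rhs => rw [hAB]
            rw [occ_split hallσ]
            rw [ihB.2, ihA.2, hfB t (Or.inl rfl) x, hfA v (Or.inr rfl) x]
            tauto
        · rw [F_deg hnil hdeg]
          have h1 : ¬ ShuffleTopOccurs t v σ := by
            intro h
            exact hdeg (occ_facLT (fun y hy => le_maxL hy) h)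
          have h2 : ¬ ShuffleTopOccurs v t σ := by
            intro h
            have := occ_facLT (fun y hy => le_maxL hy) h
            exact hdeg ⟨this.2, this.1⟩
          exact ⟨iff_of_false h2 h1, iff_of_false h1 h2⟩
  exact fun σ => H σ.length σ le_rfl


lemma F_injective (t v : List ℕ) : Function.Injective (F t v) := by
  have H : ∀ n : ℕ, ∀ σ σ' : List ℕ, σ.length ≤ n → F t v σ = F t v σ' → σ = σ' := by
    intro n
    induction n with
    | zero =>
      intro σ σ' hσ h
      have hσ0 : σ = [] := List.length_eq_zero_iff.1 (Nat.le_zero.1 hσ)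
      subst hσ0
      rw [F_nil] at h
      have hp := F_perm t v σ'
      rw [← h] at hp
      exact (List.Perm.eq_nil hp).symm
    | succ n ih =>
      intro σ σ' hσ h
      rcases eq_or_ne σ [] with rfl | hnil
      · rw [F_nil] at h
        have hp := F_perm t v σ'
        rw [← h] at hp
        exact (List.Perm.eq_nil hp).symm
      · rcases eq_or_ne σ' [] with rfl | hnil'
        · rw [F_nil] at h
          have hp := F_perm t v σ
          rw [h] at hp
          exact List.Perm.eq_nil hp
        · have hmax : maxL σ = maxL σ' := by
            rw [← maxL_F t v σ, ← maxL_F t v σ', h]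
          set x := maxL σ with hx
          have hdeg_iff : (FacLT t x σ ∧ FacLT v x σ) ↔ (FacLT t x σ' ∧ FacLT v x σ') := by
            rw [← F_facLT t v σ t (Or.inl rfl) x, ← F_facLT t v σ v (Or.inr rfl) x,
              ← F_facLT t v σ' t (Or.inl rfl) x, ← F_facLT t v σ' v (Or.inr rfl) x, h]
          by_cases hdeg : FacLT t x σ ∧ FacLT v x σ
          · have hdeg' : FacLT t (maxL σ') σ' ∧ FacLT v (maxL σ') σ' := by
              rw [← hmax]
              exact hdeg_iff.1 hdeg
            obtain ⟨A, B, hAB, hxA, hlA, hlB, hF⟩ := F_step hnil hdeg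
            obtain ⟨A', B', hAB', hxA', hlA', hlB', hF'⟩ := F_step hnil' hdeg'
            rw [hF, hF'] at h
            rw [← hmax] at hAB' hxA' h
            have hxFA : x ∉ F t v A := fun hm => hxA ((F_perm t v A).symm.subset hm)
            have hxFA' : x ∉ F t v A' := fun hm => hxA' ((F_perm t v A').symm.subset hm)
            obtain ⟨hB, hA⟩ := last_split_unique h hxFA hxFA'
            have hBB : B = B' := ih B B' (by omega) hB
            have hAA : A = A' := ih A A' (by omega) hA
            rw [hAB, hAB', hAA, hBB]
          · have hdeg' : ¬ (FacLT t (maxL σ') σ' ∧ FacLT v (maxL σ') σ') := by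
              rw [← hmax]
              exact fun hcon => hdeg (hdeg_iff.2 hcon)
            rw [F_deg hnil hdeg, F_deg hnil' hdeg'] at h
            exact h
  exact fun σ σ' h => H σ.length σ σ' le_rfl h

lemma F_surjective (t v : List ℕ) : Function.Surjective (F t v) := by
  have H : ∀ n : ℕ, ∀ ζ : List ℕ, ζ.length ≤ n → ∃ σ, F t v σ = ζ := by
    intro n
    induction n with
    | zero =>
      intro ζ hζ
      have : ζ = [] := List.length_eq_zero_iff.1 (Nat.le_zero.1 hζ)
      subst this
      exact ⟨[], F_nil t v⟩
    | succ n ih =>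
      intro ζ hζ
      rcases eq_or_ne ζ [] with rfl | hnil
      · exact ⟨[], F_nil t v⟩
      · set x := maxL ζ with hx
        by_cases hdeg : FacLT t x ζ ∧ FacLT v x ζ
        · obtain ⟨C, D, hCD, hxD⟩ := exists_last_split (maxL_mem hnil)
          have hlenζ : ζ.length = C.length + D.length + 1 := by rw [hCD, len_sep]
          obtain ⟨ρ, hρ⟩ := ih C (by omega)
          obtain ⟨α, hα⟩ := ih D (by omega)
          have hpα : α.Perm D := hα ▸ F_perm t v α
          have hpρ : ρ.Perm C := hρ ▸ F_perm t v ρ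
          refine ⟨α ++ x :: ρ, ?_⟩
          set σ := α ++ x :: ρ with hσdef
          have hσnil : σ ≠ [] := by
            rw [hσdef]
            exact List.append_ne_nil_of_right_ne_nil _ (List.cons_ne_nil _ _)
          have hperm : σ.Perm ζ := by
            have p1 : List.Perm σ (x :: (α ++ ρ)) := List.perm_middle
            have p2 : List.Perm (α ++ ρ) (C ++ D) := by
              have := hpα.append hpρ
              exact this.trans List.perm_append_comm
            have p3 : List.Perm (C ++ x :: D) (x :: (C ++ D)) := List.perm_middle
            rw [hCD]
            exact (p1.trans ((p2).cons x)).trans p3.symm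
          have hmaxσ : maxL σ = x := maxL_perm hperm
          have hxα : x ∉ α := fun hm => hxD (hpα.subset hm)
          have hsplit := splitA_eq (B := ρ) (x := x) (A := α) hxα
          have hdegσ : FacLT t (maxL σ) σ ∧ FacLT v (maxL σ) σ := by
            rw [hmaxσ]
            have htζ : ∀ w, (w = t ∨ w = v) → (FacLT w x σ ↔ FacLT w x ζ) := by
              intro w hw
              rw [hσdef, facLT_split le_rfl]
              conv_rhs => rw [hCD]
              rw [facLT_split le_rfl]
              rw [← hα, ← hρ, F_facLT t v α w hw x, F_facLT t v ρ w hw x]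
              exact or_comm
            exact ⟨(htζ t (Or.inl rfl)).2 hdeg.1, (htζ v (Or.inr rfl)).2 hdeg.2⟩
          rw [F_nondeg hσnil hdegσ, hmaxσ]
          rw [show splitB x σ = ρ from hσdef ▸ hsplit.2, show splitA x σ = α from hσdef ▸ hsplit.1]
          rw [hρ, hα, hCD]
        · refine ⟨ζ, ?_⟩
          exact F_deg hnil hdeg
  exact fun ζ => H ζ.length ζ le_rfl


/-! ### Assembly : the Top case -/

lemma IsCompOf_perm {A : Finset ℕ} {n m : ℕ} {σ σ' : List ℕ} (h : σ.Perm σ')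
    (hc : IsCompOf A n m σ) : IsCompOf A n m σ' :=
  ⟨fun x hx => hc.1 x (h.symm.subset hx),
    by rw [← h.sum_eq]; exact hc.2.1,
    by rw [← h.length_eq]; exact hc.2.2⟩

lemma top_eq (t v : List ℕ) (A : Finset ℕ) (n m : ℕ) :
    {σ : List ℕ | IsCompOf A n m σ ∧ ¬ ShuffleTopOccurs t v σ}.ncard
      = {σ : List ℕ | IsCompOf A n m σ ∧ ¬ ShuffleTopOccurs v t σ}.ncard := by
  have himg : F t v '' {σ : List ℕ | IsCompOf A n m σ ∧ ¬ ShuffleTopOccurs t v σ}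
      = {σ : List ℕ | IsCompOf A n m σ ∧ ¬ ShuffleTopOccurs v t σ} := by
    ext ζ
    constructor
    · rintro ⟨σ, ⟨hc, hno⟩, rfl⟩
      refine ⟨IsCompOf_perm (F_perm t v σ) hc, ?_⟩
      rw [(F_occ t v σ).1]
      exact hno
    · rintro ⟨hc, hno⟩
      obtain ⟨σ, rfl⟩ := F_surjective t v ζ
      refine ⟨σ, ⟨IsCompOf_perm (F_perm t v σ).symm hc, fun h => ?_⟩, rfl⟩
      exact hno ((F_occ t v σ).1.2 h)
  calc {σ : List ℕ | IsCompOf A n m σ ∧ ¬ ShuffleTopOccurs t v σ}.ncard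
      = (F t v '' {σ : List ℕ | IsCompOf A n m σ ∧ ¬ ShuffleTopOccurs t v σ}).ncard :=
        (Set.ncard_image_of_injective _ (F_injective t v)).symm
    _ = {σ : List ℕ | IsCompOf A n m σ ∧ ¬ ShuffleTopOccurs v t σ}.ncard := by rw [himg]

/-! ### The Bot case via order-reversal -/

lemma getD_map_lt (f : ℕ → ℕ) {l : List ℕ} {k : ℕ} (hk : k < l.length) :
    (l.map f).getD k 0 = f (l.getD k 0) := by
  rw [List.getD_eq_getElem _ _ (by simpa using hk), List.getD_eq_getElem _ _ hk,
    List.getElem_map]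

lemma iso_map_iff {c : ℕ} {w σ : List ℕ} {i : ℕ} (hw : ∀ y ∈ w, y < c)
    (hσ : ∀ y ∈ σ, y < c) :
    WordIsoAt (w.map (c - ·)) (σ.map (c - ·)) i ↔ WordIsoAt w σ i := by
  unfold WordIsoAt
  rw [List.length_map, List.length_map]
  constructor
  · rintro ⟨hb, hiso⟩
    refine ⟨hb, fun s u hs hu => ?_⟩
    have h1 := hiso u s hu hs
    rw [getD_map_lt _ hu, getD_map_lt _ hs, getD_map_lt _ (by omega),
      getD_map_lt _ (by omega)] at h1
    have b1 : w.getD s 0 < c := hw _ (getD_mem hs)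
    have b2 : w.getD u 0 < c := hw _ (getD_mem hu)
    have b3 : σ.getD (i + s) 0 < c := hσ _ (getD_mem (by omega))
    have b4 : σ.getD (i + u) 0 < c := hσ _ (getD_mem (by omega))
    omega
  · rintro ⟨hb, hiso⟩
    refine ⟨hb, fun s u hs hu => ?_⟩
    have h1 := hiso u s hu hs
    rw [getD_map_lt _ hu, getD_map_lt _ hs, getD_map_lt _ (by omega),
      getD_map_lt _ (by omega)]
    have b1 : w.getD s 0 < c := hw _ (getD_mem hs)
    have b2 : w.getD u 0 < c := hw _ (getD_mem hu)
    have b3 : σ.getD (i + s) 0 < c := hσ _ (getD_mem (by omega))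
    have b4 : σ.getD (i + u) 0 < c := hσ _ (getD_mem (by omega))
    omega

lemma bot_top {c : ℕ} {t v σ : List ℕ} (ht : ∀ y ∈ t, y < c) (hv : ∀ y ∈ v, y < c)
    (hσ : ∀ y ∈ σ, y < c) :
    ShuffleBotOccurs t v σ ↔
      ShuffleTopOccurs (t.map (c - ·)) (v.map (c - ·)) (σ.map (c - ·)) := by
  constructor
  · rintro ⟨i, p, j, hti, hip, hpj, hvj, hdt, hdv⟩
    have hbt := hti.1
    have hbv := hvj.1
    have hp : p < σ.length := by omega
    refine ⟨i, p, j, (iso_map_iff ht hσ).2 hti, by simpa using hip, hpj,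
      (iso_map_iff hv hσ).2 hvj, ?_, ?_⟩
    · intro s hs
      rw [List.length_map] at hs
      rw [getD_map_lt _ (by omega : i + s < σ.length), getD_map_lt _ hp]
      have h1 := hdt s hs
      have b1 : σ.getD (i + s) 0 < c := hσ _ (getD_mem (by omega))
      have b2 : σ.getD p 0 < c := hσ _ (getD_mem hp)
      omega
    · intro s hs
      rw [List.length_map] at hs
      rw [getD_map_lt _ (by omega : j + s < σ.length), getD_map_lt _ hp]
      have h1 := hdv s hs
      have b1 : σ.getD (j + s) 0 < c := hσ _ (getD_mem (by omega))
      have b2 : σ.getD p 0 < c := hσ _ (getD_mem hp)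
      omega
  · rintro ⟨i, p, j, hti, hip, hpj, hvj, hdt, hdv⟩
    have hbt := hti.1
    have hbv := hvj.1
    rw [List.length_map, List.length_map] at hbt
    rw [List.length_map, List.length_map] at hbv
    rw [List.length_map] at hip
    have hp : p < σ.length := by omega
    refine ⟨i, p, j, (iso_map_iff ht hσ).1 hti, hip, hpj, (iso_map_iff hv hσ).1 hvj, ?_, ?_⟩
    · intro s hs
      have h1 := hdt s (by rw [List.length_map]; exact hs)
      rw [getD_map_lt _ (by omega : i + s < σ.length), getD_map_lt _ hp] at h1
      have b1 : σ.getD (i + s) 0 < c := hσ _ (getD_mem (by omega))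
      have b2 : σ.getD p 0 < c := hσ _ (getD_mem hp)
      omega
    · intro s hs
      have h1 := hdv s (by rw [List.length_map]; exact hs)
      rw [getD_map_lt _ (by omega : j + s < σ.length), getD_map_lt _ hp] at h1
      have b1 : σ.getD (j + s) 0 < c := hσ _ (getD_mem (by omega))
      have b2 : σ.getD p 0 < c := hσ _ (getD_mem hp)
      omega

lemma map_map_id {c : ℕ} {l : List ℕ} (h : ∀ y ∈ l, y ≤ c) :
    (l.map (c - ·)).map (c - ·) = l := by
  rw [List.map_map]
  conv_rhs => rw [← List.map_id l]
  exact List.map_congr_left (fun a ha => by have := h a ha; simp; omega)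

lemma bot_eq (t v : List ℕ) (A : Finset ℕ) (hA : ∀ a ∈ A, 0 < a) (n m : ℕ) :
    {σ : List ℕ | IsCompOf A n m σ ∧ ¬ ShuffleBotOccurs t v σ}.ncard
      = {σ : List ℕ | IsCompOf A n m σ ∧ ¬ ShuffleBotOccurs v t σ}.ncard := by
  classical
  set c := A.sup id + maxL t + maxL v + 1 with hcdef
  have hcA : ∀ a ∈ A, a < c := by
    intro a ha
    have := Finset.le_sup (f := id) ha
    simp only [id] at this
    omega
  have hct : ∀ y ∈ t, y < c := fun y hy => by have := le_maxL hy; omega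
  have hcv : ∀ y ∈ v, y < c := fun y hy => by have := le_maxL hy; omega
  set t' := t.map (c - ·) with ht'
  set v' := v.map (c - ·) with hv'
  set Φ : List ℕ → List ℕ := fun σ => (F t' v' (σ.map (c - ·))).map (c - ·) with hΦ
  have himg : Φ '' {σ : List ℕ | IsCompOf A n m σ ∧ ¬ ShuffleBotOccurs t v σ}
      = {σ : List ℕ | IsCompOf A n m σ ∧ ¬ ShuffleBotOccurs v t σ} := by
    ext η
    constructor
    · rintro ⟨σ, ⟨hc, hno⟩, rfl⟩
      have hσc : ∀ y ∈ σ, y < c := fun y hy => hcA y (hc.1 y hy)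
      have hσpos : ∀ y ∈ σ, 0 < y := fun y hy => hA y (hc.1 y hy)
      have hζc : ∀ y ∈ σ.map (c - ·), y < c := by
        intro y hy
        obtain ⟨a, ha, rfl⟩ := List.mem_map.1 hy
        have := hσpos a ha
        omega
      have hFζc : ∀ y ∈ F t' v' (σ.map (c - ·)), y < c :=
        fun y hy => hζc y ((F_perm t' v' _).symm.subset hy)
      have hΦperm : (Φ σ).Perm σ := by
        have h1 : List.Perm ((σ.map (c - ·)).map (c - ·))
            ((F t' v' (σ.map (c - ·))).map (c - ·)) := (F_perm t' v' _).map _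
        rw [map_map_id (fun y hy => (hσc y hy).le)] at h1
        exact h1.symm
      refine ⟨IsCompOf_perm hΦperm.symm hc, ?_⟩
      have hΦc : ∀ y ∈ Φ σ, y < c := fun y hy => hσc y (hΦperm.subset hy)
      rw [bot_top hcv hct hΦc]
      have hback : (Φ σ).map (c - ·) = F t' v' (σ.map (c - ·)) :=
        map_map_id (fun y hy => (hFζc y hy).le)
      rw [hback, (F_occ t' v' _).1, ← bot_top hct hcv hσc]
      exact hno
    · rintro ⟨hc, hno⟩
      have hηc : ∀ y ∈ η, y < c := fun y hy => hcA y (hc.1 y hy)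
      have hηpos : ∀ y ∈ η, 0 < y := fun y hy => hA y (hc.1 y hy)
      have hξc : ∀ y ∈ η.map (c - ·), y < c := by
        intro y hy
        obtain ⟨a, ha, rfl⟩ := List.mem_map.1 hy
        have := hηpos a ha
        omega
      obtain ⟨ζ₀, hζ₀⟩ := F_surjective t' v' (η.map (c - ·))
      have hζ₀c : ∀ y ∈ ζ₀, y < c := by
        intro y hy
        have : y ∈ F t' v' ζ₀ := (F_perm t' v' ζ₀).subset hy
        rw [hζ₀] at this
        exact hξc y this
      have hgσ : (ζ₀.map (c - ·)).map (c - ·) = ζ₀ :=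
        map_map_id (fun y hy => (hζ₀c y hy).le)
      have hσperm : (ζ₀.map (c - ·)).Perm η := by
        have h1 : List.Perm (ζ₀.map (c - ·)) ((F t' v' ζ₀).map (c - ·)) :=
          (F_perm t' v' ζ₀).map _
        rw [hζ₀, map_map_id (fun y hy => (hηc y hy).le)] at h1
        exact h1
      have hσc : ∀ y ∈ ζ₀.map (c - ·), y < c := fun y hy => hηc y (hσperm.subset hy)
      refine ⟨ζ₀.map (c - ·), ⟨IsCompOf_perm hσperm.symm hc, ?_⟩, ?_⟩
      · rw [bot_top hct hcv hσc, hgσ, ← (F_occ t' v' ζ₀).1, hζ₀, ← bot_top hcv hct hηc]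
        exact hno
      · show (F t' v' ((ζ₀.map (c - ·)).map (c - ·))).map (c - ·) = η
        rw [hgσ, hζ₀, map_map_id (fun y hy => (hηc y hy).le)]
  have hinj : Set.InjOn Φ {σ : List ℕ | IsCompOf A n m σ ∧ ¬ ShuffleBotOccurs t v σ} := by
    rintro σ ⟨hc, _⟩ σ' ⟨hc', _⟩ heq
    have hσc : ∀ y ∈ σ, y ≤ c := fun y hy => (hcA y (hc.1 y hy)).le
    have hσc' : ∀ y ∈ σ', y ≤ c := fun y hy => (hcA y (hc'.1 y hy)).le
    have hσpos : ∀ y ∈ σ, 0 < y := fun y hy => hA y (hc.1 y hy)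
    have hσpos' : ∀ y ∈ σ', 0 < y := fun y hy => hA y (hc'.1 y hy)
    have hF1 : ∀ y ∈ F t' v' (σ.map (c - ·)), y ≤ c := by
      intro y hy
      have h2 : y ∈ σ.map (c - ·) := (F_perm t' v' _).symm.subset hy
      obtain ⟨a, _, rfl⟩ := List.mem_map.1 h2
      omega
    have hF2 : ∀ y ∈ F t' v' (σ'.map (c - ·)), y ≤ c := by
      intro y hy
      have h2 : y ∈ σ'.map (c - ·) := (F_perm t' v' _).symm.subset hy
      obtain ⟨a, _, rfl⟩ := List.mem_map.1 h2
      omega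
    have heq2 := congrArg (List.map (c - ·)) heq
    simp only [hΦ] at heq2
    rw [map_map_id hF1, map_map_id hF2] at heq2
    have heq3 := F_injective t' v' heq2
    have heq4 := congrArg (List.map (c - ·)) heq3
    rw [map_map_id hσc, map_map_id hσc'] at heq4
    exact heq4
  calc {σ : List ℕ | IsCompOf A n m σ ∧ ¬ ShuffleBotOccurs t v σ}.ncard
      = (Φ '' {σ : List ℕ | IsCompOf A n m σ ∧ ¬ ShuffleBotOccurs t v σ}).ncard :=
        (Set.ncard_image_of_injOn hinj).symm
    _ = {σ : List ℕ | IsCompOf A n m σ ∧ ¬ ShuffleBotOccurs v t σ}.ncard := by rw [himg]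

end SPaux

theorem stmt8 (τ ν : List ℕ) (hτ : τ ≠ []) (hν : ν ≠ [])
    (hτpos : ∀ x ∈ τ, 0 < x) (hνpos : ∀ x ∈ ν, 0 < x) :
    ∀ (A : Finset ℕ), (∀ a ∈ A, 0 < a) → ∀ n m : ℕ,
      (Set.ncard {σ : List ℕ | IsCompOf A n m σ ∧ ¬ ShuffleTopOccurs τ ν σ}
        = Set.ncard {σ : List ℕ | IsCompOf A n m σ ∧ ¬ ShuffleTopOccurs ν τ σ}) ∧
      (Set.ncard {σ : List ℕ | IsCompOf A n m σ ∧ ¬ ShuffleBotOccurs τ ν σ}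
        = Set.ncard {σ : List ℕ | IsCompOf A n m σ ∧ ¬ ShuffleBotOccurs ν τ σ}) := by
  intro A hA n m
  exact ⟨SPaux.top_eq τ ν A n m, SPaux.bot_eq τ ν A hA n m⟩
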